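/- Let p, q, m, s, t be natural numbers. The number of functions f from the disjoint union (Fin q) ⊕ (Fin p) ⊕ (Fin (m+1)) to ℕ such that the total sum of the values of f equals s+t, the sum of the values of f over the Fin q summand is at most s, and the sum of the values of f over the Fin p summand is at most t, when added to Σ_{ℓ=0}^{m−1} C(s+q+ℓ, q+ℓ)·C(t+p+m−1−ℓ, p+m−1−ℓ), equals Σ_{ℓ=0}^{m} C(s+q+ℓ, q+ℓ)·C(t+p+m−ℓ, p+m−ℓ). (For m = 0 the first sum is empty.) -/

import Mathlib

open Finset

namespace MonomialCountAux

/-- The defining condition of the counted set. -/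
abbrev SC (q p r s t : ℕ) (f : Fin q ⊕ Fin p ⊕ Fin r → ℕ) : Prop :=
  (∑ x, f x) = s + t ∧ (∑ i : Fin q, f (Sum.inl i)) ≤ s ∧
    (∑ i : Fin p, f (Sum.inr (Sum.inl i))) ≤ t

/-! ### Counting lemmas -/

lemma natCard_sum_eq (α : Type*) [Fintype α] [DecidableEq α] (n : ℕ) :
    Nat.card {g : α → ℕ // ∑ i, g i = n} = (n + Fintype.card α - 1).choose n := by
  rw [Nat.card_congr (Sym.equivNatSumOfFintype α n).symm, Nat.card_eq_fintype_card,
    Sym.card_sym_eq_choose]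
  congr 1
  omega

lemma natCard_sum_le (α : Type*) [Fintype α] [DecidableEq α] (s : ℕ) :
    Nat.card {g : α → ℕ // ∑ i, g i ≤ s} = (s + Fintype.card α).choose (Fintype.card α) := by
  have e : {g : α → ℕ // ∑ i, g i ≤ s} ≃ {g : Option α → ℕ // ∑ i, g i = s} := by
    refine ⟨fun g => ⟨fun o => Option.elim o (s - ∑ i, g.1 i) g.1, ?_⟩,
      fun g => ⟨fun a => g.1 (some a), ?_⟩, ?_, ?_⟩
    · have := g.2
      rw [Fintype.sum_option]
      simp only [Option.elim]
      omega
    · have := g.2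
      rw [Fintype.sum_option] at this
      show (∑ i : α, g.1 (some i)) ≤ s
      omega
    · rintro ⟨g, hg⟩; rfl
    · rintro ⟨g, hg⟩
      ext o
      rcases o with _ | a
      · rw [Fintype.sum_option] at hg
        show s - (∑ i : α, g (some i)) = g none
        omega
      · rfl
  rw [Nat.card_congr e, natCard_sum_eq]
  simp only [Fintype.card_option]
  have h1 : s + (Fintype.card α + 1) - 1 = s + Fintype.card α := by omega
  rw [h1, ← Nat.choose_symm (Nat.le_add_left (Fintype.card α) s)]
  congr 1
  omega

lemma natCard_sum_lt (α : Type*) [Fintype α] [DecidableEq α] (t : ℕ) (h : 0 < Fintype.card α) :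
    Nat.card {g : α → ℕ // ∑ i, g i < t} = (t + Fintype.card α - 1).choose (Fintype.card α) := by
  rcases t with _ | t'
  · have : IsEmpty {g : α → ℕ // ∑ i, g i < 0} := ⟨fun g => by omega⟩
    rw [Nat.card_of_isEmpty, eq_comm, Nat.choose_eq_zero_iff]
    omega
  · have e : {g : α → ℕ // ∑ i, g i < t' + 1} ≃ {g : α → ℕ // ∑ i, g i ≤ t'} :=
      Equiv.subtypeEquivRight (fun g => by omega)
    rw [Nat.card_congr e, natCard_sum_le]
    congr 1
    omega

/-! ### Finiteness -/

lemma finite_sum_eq (α : Type*) [Fintype α] (n : ℕ) :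
    Finite {f : α → ℕ // ∑ i, f i = n} := by
  apply Finite.of_injective (fun g => (fun i => (⟨g.1 i, by
    have h := Finset.single_le_sum (f := g.1) (fun i _ => Nat.zero_le _) (Finset.mem_univ i)
    have := g.2
    omega⟩ : Fin (n+1))))
  intro a b hab
  ext i
  have := congrFun hab i
  simpa [Fin.mk.injEq] using this

lemma finite_of_sum_eq {α : Type*} [Fintype α] {P : (α → ℕ) → Prop} {n : ℕ}
    (h : ∀ f, P f → ∑ i, f i = n) : Finite {f : α → ℕ // P f} := by
  have := finite_sum_eq α n
  apply Finite.of_injective (fun g => (⟨g.1, h g.1 g.2⟩ : {f : α → ℕ // ∑ i, f i = n}))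
  intro a b hab
  have h2 : a.1 = b.1 := by simpa [Subtype.mk.injEq] using hab
  exact Subtype.ext h2

lemma natCard_split {β : Type*} (P Q : β → Prop) [Finite {x : β // P x}] :
    Nat.card {x : β // P x} = Nat.card {x : β // P x ∧ Q x} + Nat.card {x : β // P x ∧ ¬ Q x} := by
  classical
  have e1 : {y : {x : β // P x} // Q y.1} ≃ {x : β // P x ∧ Q x} :=
    Equiv.subtypeSubtypeEquivSubtypeInter P Q
  have e2 : {y : {x : β // P x} // ¬ Q y.1} ≃ {x : β // P x ∧ ¬ Q x} :=
    Equiv.subtypeSubtypeEquivSubtypeInter P (fun x => ¬ Q x)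
  have e3 : {y : {x : β // P x} // Q y.1} ⊕ {y : {x : β // P x} // ¬ Q y.1} ≃ {x : β // P x} :=
    Equiv.sumCompl _
  rw [← Nat.card_congr e3, Nat.card_sum, Nat.card_congr e1, Nat.card_congr e2]

/-! ### The base case bijection -/

def baseEquiv (p q s t : ℕ) :
    {f : Fin q ⊕ Fin p ⊕ Fin 1 → ℕ // SC q p 1 s t f}
      ≃ {g : Fin q → ℕ // ∑ i, g i ≤ s} × {h : Fin p → ℕ // ∑ j, h j ≤ t} := by
  have hsum : ∀ f : Fin q ⊕ Fin p ⊕ Fin 1 → ℕ,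
      (∑ x, f x) = (∑ i : Fin q, f (Sum.inl i)) +
        ((∑ j : Fin p, f (Sum.inr (Sum.inl j))) + f (Sum.inr (Sum.inr 0))) := by
    intro f
    rw [Fintype.sum_sum_type, Fintype.sum_sum_type, Fin.sum_univ_one]
  refine ⟨fun f => (⟨fun i => f.1 (Sum.inl i), f.2.2.1⟩,
      ⟨fun j => f.1 (Sum.inr (Sum.inl j)), f.2.2.2⟩),
    fun gh => ⟨fun x => match x with
      | Sum.inl i => gh.1.1 i
      | Sum.inr (Sum.inl j) => gh.2.1 j
      | Sum.inr (Sum.inr _) => s + t - (∑ i, gh.1.1 i + ∑ j, gh.2.1 j), ?_, gh.1.2, gh.2.2⟩,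
    ?_, ?_⟩
  · rw [hsum]
    show (∑ i, gh.1.1 i) + ((∑ j, gh.2.1 j) + (s + t - (∑ i, gh.1.1 i + ∑ j, gh.2.1 j))) = s + t
    have := gh.1.2
    have := gh.2.2
    omega
  · rintro ⟨f, hf⟩
    apply Subtype.ext
    funext x
    rcases x with i | j | k
    · rfl
    · rfl
    · show s + t - (∑ i, f (Sum.inl i) + ∑ j, f (Sum.inr (Sum.inl j))) = f (Sum.inr (Sum.inr k))
      have hk : k = 0 := Subsingleton.elim k 0
      subst hk
      have h1 := hsum f
      have h2 := hf.1
      omega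
  · rintro ⟨⟨g, hg⟩, ⟨h, hh⟩⟩
    rfl

lemma base_card (p q s t : ℕ) :
    Nat.card {f : Fin q ⊕ Fin p ⊕ Fin 1 → ℕ // SC q p 1 s t f}
      = (s + q).choose q * (t + p).choose p := by
  rw [Nat.card_congr (baseEquiv p q s t), Nat.card_prod, natCard_sum_le, natCard_sum_le]
  simp [Fintype.card_fin]

/-! ### The relabelling bijection (merging `z₀` into the `x`-block) -/

def relabel (q p m : ℕ) :
    (Fin q ⊕ Fin p ⊕ Fin (m+2) → ℕ) ≃ (Fin (q+1) ⊕ Fin p ⊕ Fin (m+1) → ℕ) where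
  toFun f := Sum.elim
    (fun i => Fin.lastCases (f (Sum.inr (Sum.inr 0))) (fun i' => f (Sum.inl i')) i)
    (Sum.elim (fun j => f (Sum.inr (Sum.inl j))) (fun k => f (Sum.inr (Sum.inr k.succ))))
  invFun g := Sum.elim
    (fun i => g (Sum.inl (Fin.castSucc i)))
    (Sum.elim (fun j => g (Sum.inr (Sum.inl j)))
      (fun k => Fin.cases (g (Sum.inl (Fin.last q))) (fun k' => g (Sum.inr (Sum.inr k'))) k))
  left_inv f := by
    funext x
    rcases x with i | j | k
    · simp
    · rfl
    · induction k using Fin.cases <;> simp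
  right_inv g := by
    funext x
    rcases x with i | j | k
    · induction i using Fin.lastCases <;> simp
    · rfl
    · simp

lemma relabel_sum_x (q p m : ℕ) (f : Fin q ⊕ Fin p ⊕ Fin (m+2) → ℕ) :
    (∑ i : Fin (q+1), relabel q p m f (Sum.inl i))
      = (∑ i : Fin q, f (Sum.inl i)) + f (Sum.inr (Sum.inr 0)) := by
  rw [Fin.sum_univ_castSucc (f := fun i : Fin (q+1) => relabel q p m f (Sum.inl i))]
  congr 1
  · exact Finset.sum_congr rfl fun i _ => by simp [relabel]
  · simp [relabel]

lemma relabel_sum_y (q p m : ℕ) (f : Fin q ⊕ Fin p ⊕ Fin (m+2) → ℕ) :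
    (∑ j : Fin p, relabel q p m f (Sum.inr (Sum.inl j)))
      = ∑ j : Fin p, f (Sum.inr (Sum.inl j)) := rfl

lemma relabel_sum_total (q p m : ℕ) (f : Fin q ⊕ Fin p ⊕ Fin (m+2) → ℕ) :
    (∑ x, relabel q p m f x) = ∑ x, f x := by
  rw [Fintype.sum_sum_type, Fintype.sum_sum_type, Fintype.sum_sum_type, Fintype.sum_sum_type,
    relabel_sum_x]
  have hz : (∑ k : Fin (m+1), relabel q p m f (Sum.inr (Sum.inr k)))
      = ∑ k : Fin (m+1), f (Sum.inr (Sum.inr k.succ)) := rfl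
  rw [hz, relabel_sum_y]
  rw [Fin.sum_univ_succ (f := fun k : Fin (m+2) => f (Sum.inr (Sum.inr k)))]
  omega

lemma step1 (p q m s t : ℕ) :
    Nat.card {f : Fin q ⊕ Fin p ⊕ Fin (m+2) → ℕ //
        SC q p (m+2) s t f ∧ (∑ i : Fin q, f (Sum.inl i)) + f (Sum.inr (Sum.inr 0)) ≤ s}
      = Nat.card {g : Fin (q+1) ⊕ Fin p ⊕ Fin (m+1) → ℕ // SC (q+1) p (m+1) s t g} := by
  apply Nat.card_congr
  apply Equiv.subtypeEquiv (relabel q p m)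
  intro f
  have h1 := relabel_sum_x q p m f
  have h2 := relabel_sum_y q p m f
  have h3 := relabel_sum_total q p m f
  unfold SC
  constructor
  · intro h; omega
  · intro h; omega

/-! ### The second step bijection -/

def stepEquiv2 (p q m s t : ℕ) :
    {f : Fin q ⊕ Fin p ⊕ Fin (m+2) → ℕ //
        SC q p (m+2) s t f ∧ ¬ ((∑ i : Fin q, f (Sum.inl i)) + f (Sum.inr (Sum.inr 0)) ≤ s)}
      ≃ {g : Fin q → ℕ // ∑ i, g i ≤ s} × {h : Fin p ⊕ Fin (m+1) → ℕ // ∑ w, h w < t} := by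
  have hsum : ∀ f : Fin q ⊕ Fin p ⊕ Fin (m+2) → ℕ,
      (∑ x, f x) = (∑ i : Fin q, f (Sum.inl i)) +
        ((∑ j : Fin p, f (Sum.inr (Sum.inl j))) +
          (f (Sum.inr (Sum.inr 0)) + ∑ k : Fin (m+1), f (Sum.inr (Sum.inr k.succ)))) := by
    intro f
    rw [Fintype.sum_sum_type, Fintype.sum_sum_type,
      Fin.sum_univ_succ (f := fun k : Fin (m+2) => f (Sum.inr (Sum.inr k)))]
  refine ⟨fun f => (⟨fun i => f.1 (Sum.inl i), f.2.1.2.1⟩,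
      ⟨Sum.elim (fun j => f.1 (Sum.inr (Sum.inl j))) (fun k => f.1 (Sum.inr (Sum.inr k.succ))), ?_⟩),
    fun gh => ⟨Sum.elim gh.1.1 (Sum.elim (fun j => gh.2.1 (Sum.inl j))
      (fun k => Fin.cases (s + t - (∑ i, gh.1.1 i + ∑ w, gh.2.1 w))
        (fun k' => gh.2.1 (Sum.inr k')) k)), ?_⟩, ?_, ?_⟩
  · -- h lands in sum < t
    rw [Fintype.sum_sum_type]
    simp only [Sum.elim_inl, Sum.elim_inr]
    have h1 := hsum f.1
    have h2 := f.2.1.1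
    have h3 := f.2.2
    omega
  · -- invFun lands in the set
    obtain ⟨⟨g, hg⟩, ⟨h, hh⟩⟩ := gh
    simp only
    have hhsplit : (∑ w, h w) = (∑ j : Fin p, h (Sum.inl j)) + ∑ k : Fin (m+1), h (Sum.inr k) :=
      Fintype.sum_sum_type h
    set F : Fin q ⊕ Fin p ⊕ Fin (m+2) → ℕ := Sum.elim g (Sum.elim (fun j => h (Sum.inl j))
      (fun k => Fin.cases (s + t - (∑ i, g i + ∑ w, h w)) (fun k' => h (Sum.inr k')) k)) with hF
    have hx : (∑ i : Fin q, F (Sum.inl i)) = ∑ i, g i := rfl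
    have hy : (∑ j : Fin p, F (Sum.inr (Sum.inl j))) = ∑ j : Fin p, h (Sum.inl j) := rfl
    have hz0 : F (Sum.inr (Sum.inr 0)) = s + t - (∑ i, g i + ∑ w, h w) := rfl
    have hzs : (∑ k : Fin (m+1), F (Sum.inr (Sum.inr k.succ)))
        = ∑ k : Fin (m+1), h (Sum.inr k) := by
      apply Finset.sum_congr rfl
      intro k _
      simp [hF]
    have htot := hsum F
    refine ⟨⟨?_, ?_, ?_⟩, ?_⟩
    · omega
    · omega
    · rw [hy]; omega
    · rw [hx, hz0]; omega
  · -- left inverse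
    rintro ⟨f, hf⟩
    apply Subtype.ext
    funext x
    rcases x with i | j | k
    · rfl
    · rfl
    · simp only [Sum.elim_inl, Sum.elim_inr]
      induction k using Fin.cases with
      | zero =>
        have h1 := hsum f
        have h2 := hf.1.1
        have h3 := hf.2
        have h4 : (∑ w, (Sum.elim (fun j => f (Sum.inr (Sum.inl j)))
            (fun k : Fin (m+1) => f (Sum.inr (Sum.inr k.succ))) : Fin p ⊕ Fin (m+1) → ℕ) w)
            = (∑ j : Fin p, f (Sum.inr (Sum.inl j))) +
              ∑ k : Fin (m+1), f (Sum.inr (Sum.inr k.succ)) := by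
          rw [Fintype.sum_sum_type]
          simp
        rw [Fin.cases_zero, h4]
        show s + t - ((∑ i : Fin q, f (Sum.inl i)) + _) = _
        omega
      | succ k' => simp
  · -- right inverse
    rintro ⟨⟨g, hg⟩, ⟨h, hh⟩⟩
    refine Prod.ext (Subtype.ext ?_) (Subtype.ext ?_)
    · rfl
    · funext w
      rcases w with j | k
      · rfl
      · simp


-- (appended to full.lean inside namespace)
lemma step2_card (p q m s t : ℕ) :
    Nat.card {f : Fin q ⊕ Fin p ⊕ Fin (m+2) → ℕ //
        SC q p (m+2) s t f ∧ ¬ ((∑ i : Fin q, f (Sum.inl i)) + f (Sum.inr (Sum.inr 0)) ≤ s)}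
      = (s + q).choose q * (t + p + m).choose (p + m + 1) := by
  rw [Nat.card_congr (stepEquiv2 p q m s t), Nat.card_prod, natCard_sum_le, natCard_sum_lt]
  · congr 2 <;> simp <;> omega
  · simp

instance finSC (q p r s t : ℕ) : Finite {f : Fin q ⊕ Fin p ⊕ Fin r → ℕ // SC q p r s t f} :=
  finite_of_sum_eq (fun f hf => hf.1)

lemma step_card (p q m s t : ℕ) :
    Nat.card {f : Fin q ⊕ Fin p ⊕ Fin (m+2) → ℕ // SC q p (m+2) s t f}
      = Nat.card {g : Fin (q+1) ⊕ Fin p ⊕ Fin (m+1) → ℕ // SC (q+1) p (m+1) s t g}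
        + (s + q).choose q * (t + p + m).choose (p + m + 1) := by
  rw [natCard_split (SC q p (m+2) s t)
      (fun f => (∑ i : Fin q, f (Sum.inl i)) + f (Sum.inr (Sum.inr 0)) ≤ s),
    step1, step2_card]

lemma main_induction (p s t : ℕ) : ∀ m q : ℕ,
    Nat.card {f : Fin q ⊕ Fin p ⊕ Fin (m+1) → ℕ // SC q p (m+1) s t f}
      + ∑ ℓ ∈ Finset.range m,
          (s + q + ℓ).choose (q + ℓ) * (t + (p + m - 1 - ℓ)).choose (p + m - 1 - ℓ)
      = ∑ ℓ ∈ Finset.range (m + 1),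
          (s + q + ℓ).choose (q + ℓ) * (t + (p + m - ℓ)).choose (p + m - ℓ) := by
  intro m
  induction m with
  | zero =>
    intro q
    rw [Finset.sum_range_zero, Finset.sum_range_one, base_card]
    simp
  | succ m ih =>
    intro q
    rw [step_card]
    rw [Finset.sum_range_succ' (fun ℓ => (s + q + ℓ).choose (q + ℓ)
        * (t + (p + (m+1) - 1 - ℓ)).choose (p + (m+1) - 1 - ℓ)) m]
    rw [Finset.sum_range_succ' (fun ℓ => (s + q + ℓ).choose (q + ℓ)
        * (t + (p + (m+1) - ℓ)).choose (p + (m+1) - ℓ)) (m+1)]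
    beta_reduce
    simp only [Nat.add_zero, Nat.sub_zero]
    have hmid : ∑ ℓ ∈ Finset.range m, (s + q + (ℓ+1)).choose (q + (ℓ+1))
          * (t + (p + (m+1) - 1 - (ℓ+1))).choose (p + (m+1) - 1 - (ℓ+1))
        = ∑ ℓ ∈ Finset.range m, (s + (q+1) + ℓ).choose ((q+1) + ℓ)
          * (t + (p + m - 1 - ℓ)).choose (p + m - 1 - ℓ) := by
      apply Finset.sum_congr rfl
      intro ℓ _
      have e1 : s + q + (ℓ+1) = s + (q+1) + ℓ := by omega
      have e2 : q + (ℓ+1) = (q+1) + ℓ := by omega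
      have e3 : p + (m+1) - 1 - (ℓ+1) = p + m - 1 - ℓ := by omega
      rw [e1, e2, e3]
    have hrhs : ∑ ℓ ∈ Finset.range (m+1), (s + q + (ℓ+1)).choose (q + (ℓ+1))
          * (t + (p + (m+1) - (ℓ+1))).choose (p + (m+1) - (ℓ+1))
        = ∑ ℓ ∈ Finset.range (m+1), (s + (q+1) + ℓ).choose ((q+1) + ℓ)
          * (t + (p + m - ℓ)).choose (p + m - ℓ) := by
      apply Finset.sum_congr rfl
      intro ℓ _
      have e1 : s + q + (ℓ+1) = s + (q+1) + ℓ := by omega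
      have e2 : q + (ℓ+1) = (q+1) + ℓ := by omega
      have e3 : p + (m+1) - (ℓ+1) = p + m - ℓ := by omega
      rw [e1, e2, e3]
    rw [hmid, hrhs]
    have e4 : p + (m+1) - 1 = p + m := by omega
    have e5 : t + (p + m) = t + p + m := by omega
    have e6 : t + (p + (m+1)) = t + p + m + 1 := by omega
    have e7 : p + (m+1) = p + m + 1 := by omega
    rw [e4, e5, e6, e7]
    have hp : (t + p + m + 1).choose (p + m + 1)
        = (t + p + m).choose (p + m) + (t + p + m).choose (p + m + 1) :=
      Nat.choose_succ_succ' (t + p + m) (p + m)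
    rw [hp, Nat.mul_add]
    have hih := ih (q + 1)
    generalize (s + q).choose q * (t + p + m).choose (p + m + 1) = u at *
    generalize (s + q).choose q * (t + p + m).choose (p + m) = v at *
    omega

end MonomialCountAux

/-- The number of monomials of total degree `s+t` in `q` variables `x`, `p` variables `y`
and `m+1` variables `z`, whose total degree in the `x`-variables is at most `s` and whose
total degree in the `y`-variables is at most `t`, added to
`Σ_{ℓ=0}^{m−1} C(s+q+ℓ, q+ℓ)·C(t+p+m−1−ℓ, p+m−1−ℓ)`, equals
`Σ_{ℓ=0}^{m} C(s+q+ℓ, q+ℓ)·C(t+p+m−ℓ, p+m−ℓ)`. -/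
theorem monomial_count_identity (p q m s t : ℕ) :
    {f : Fin q ⊕ Fin p ⊕ Fin (m + 1) → ℕ |
        (∑ x, f x) = s + t ∧ (∑ i : Fin q, f (Sum.inl i)) ≤ s ∧
          (∑ i : Fin p, f (Sum.inr (Sum.inl i))) ≤ t}.ncard
      + ∑ ℓ ∈ Finset.range m,
          (s + q + ℓ).choose (q + ℓ) * (t + (p + m - 1 - ℓ)).choose (p + m - 1 - ℓ)
      = ∑ ℓ ∈ Finset.range (m + 1),
          (s + q + ℓ).choose (q + ℓ) * (t + (p + m - ℓ)).choose (p + m - ℓ) := by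
  have hcard : {f : Fin q ⊕ Fin p ⊕ Fin (m + 1) → ℕ |
        (∑ x, f x) = s + t ∧ (∑ i : Fin q, f (Sum.inl i)) ≤ s ∧
          (∑ i : Fin p, f (Sum.inr (Sum.inl i))) ≤ t}.ncard
      = Nat.card {f : Fin q ⊕ Fin p ⊕ Fin (m+1) → ℕ // MonomialCountAux.SC q p (m+1) s t f} := by
    rw [← Nat.card_coe_set_eq]
    rfl
  rw [hcard]
  exact MonomialCountAux.main_induction p s t m q
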